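/- Let k ≥ 1 and n = 3k, and work in ZMod n. For each i, let T_i be the set of unordered pairs {{i, i+t} : 1 ≤ t ≤ k} ∪ {{i+k, i+k+t} : 1 ≤ t ≤ k} ∪ {{i+2k, i+2k+t} : 1 ≤ t ≤ k−1}, with all arithmetic modulo n. Then for all distinct i, j ∈ {0, 1, …, k−1}, the edge sets T_i and T_j are disjoint, and each T_i is the edge set of a spanning tree of the complete graph on ZMod n (it has n − 1 edges and the corresponding graph is connected and acyclic). -/

import Mathlib

private lemma acyclic_of_rank {V : Type*} (G : SimpleGraph V) (P : V → V) (r : V → ℕ)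
    (h : ∀ x y, G.Adj x y → (y = P x ∧ r y < r x) ∨ (x = P y ∧ r x < r y)) :
    G.IsAcyclic := by
  intro v p hp
  classical
  obtain ⟨u, hu, hmax⟩ := p.support.toFinset.exists_max_image r ⟨v, by simp⟩
  rw [List.mem_toFinset] at hu
  have hq : (p.rotate u hu).IsCycle := hp.rotate hu
  set q := p.rotate u hu with hqdef
  have hmaxq : ∀ w ∈ q.support, r w ≤ r u := by
    intro w hw
    have hperm := SimpleGraph.Walk.support_rotate p u hu
    rw [q.support_eq_cons] at hw
    rcases List.mem_cons.mp hw with rfl | hw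
    · exact le_refl _
    · exact hmax w (List.mem_toFinset.mpr (List.mem_of_mem_tail (hperm.mem_iff.mp hw)))
  have first : ∀ (q' : G.Walk u u), q' ≠ SimpleGraph.Walk.nil →
      (∀ w ∈ q'.support, r w ≤ r u) →
      ∃ (b : V) (hadj : G.Adj u b) (t : G.Walk b u),
        q' = SimpleGraph.Walk.cons hadj t ∧ b = P u := by
    intro q' hne hm
    cases q' with
    | nil => exact absurd rfl hne
    | @cons _ b _ hadj t =>
      refine ⟨b, hadj, t, rfl, ?_⟩
      rcases h u b hadj with ⟨hb, _⟩ | ⟨_, hlt⟩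
      · exact hb
      · have : r b ≤ r u := hm b (by simp [SimpleGraph.Walk.support_cons])
        omega
  obtain ⟨b, hadj, t, hq1, hbP⟩ := first q hq.ne_nil hmaxq
  obtain ⟨b', hadj', t', hq2, hbP'⟩ := first q.reverse
    (by
      intro hnil
      have h3 := hq.three_le_length
      have := congrArg SimpleGraph.Walk.length hnil
      rw [SimpleGraph.Walk.length_reverse, SimpleGraph.Walk.length_nil] at this
      omega)
    (by
      intro w hw
      apply hmaxq
      rwa [SimpleGraph.Walk.support_reverse, List.mem_reverse] at hw)
  have hlast : q.edges.getLast? = some s(u, b') := by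
    rw [List.getLast?_eq_head?_reverse, ← SimpleGraph.Walk.edges_reverse, hq2,
      SimpleGraph.Walk.edges_cons, List.head?_cons]
  have hedges : q.edges = s(u, b) :: t.edges := by rw [hq1, SimpleGraph.Walk.edges_cons]
  have htne : t.edges ≠ [] := by
    have h3 := hq.three_le_length
    have hl1 : t.edges.length = t.length := SimpleGraph.Walk.length_edges t
    have hl2 : q.length = t.length + 1 := by rw [hq1]; simp
    intro hnil
    rw [hnil] at hl1
    simp at hl1
    omega
  obtain ⟨c0, l0, hl0⟩ := List.exists_cons_of_ne_nil htne
  have hmem : s(u, b') ∈ t.edges := by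
    rw [hedges, hl0, List.getLast?_cons_cons] at hlast
    rw [hl0]
    exact List.mem_of_getLast? hlast
  have hnodup := hq.edges_nodup
  rw [hedges, List.nodup_cons] at hnodup
  have heq : s(u, b) = s(u, b') := by rw [hbP, hbP']
  exact hnodup.1 (heq ▸ hmem)


theorem zmod_spanning_tree_packing
    (k n : ℕ) (hk : 1 ≤ k) (hn : n = 3 * k)
    (T : ZMod n → Set (Sym2 (ZMod n)))
    (hT : ∀ i : ZMod n, T i =
      {e | ∃ t : ℕ, 1 ≤ t ∧ t ≤ k ∧ e = s(i, i + (t : ZMod n))} ∪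
      {e | ∃ t : ℕ, 1 ≤ t ∧ t ≤ k ∧ e = s(i + (k : ZMod n), i + (k : ZMod n) + (t : ZMod n))} ∪
      {e | ∃ t : ℕ, 1 ≤ t ∧ t ≤ k - 1 ∧
        e = s(i + ((2 * k : ℕ) : ZMod n), i + ((2 * k : ℕ) : ZMod n) + (t : ZMod n))}) :
    (∀ i j : ℕ, i < k → j < k → i ≠ j →
      Disjoint (T ((i : ℕ) : ZMod n)) (T ((j : ℕ) : ZMod n))) ∧
    (∀ i : ℕ, i < k →
      (T ((i : ℕ) : ZMod n)).ncard = n - 1 ∧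
      (SimpleGraph.fromEdgeSet (T ((i : ℕ) : ZMod n))).Connected ∧
      (SimpleGraph.fromEdgeSet (T ((i : ℕ) : ZMod n))).IsAcyclic) := by
  subst hn
  haveI : NeZero (3 * k) := ⟨by omega⟩
  set c : ℕ → ℕ := fun t => if t ≤ k then 0 else if t ≤ 2 * k then k else 2 * k with hc
  have hclt : ∀ t, 1 ≤ t → c t < t := by
    intro t ht; simp only [hc]; split_ifs <;> omega
  have hcle : ∀ t, c t ≤ 2 * k := by
    intro t; simp only [hc]; split_ifs <;> omega
  have hcgap : ∀ t, t ≤ 3 * k - 1 → t - c t ≤ k := by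
    intro t ht; simp only [hc]; split_ifs <;> omega
  have hcval : ∀ t, c t = 0 ∨ c t = k ∨ c t = 2 * k := by
    intro t; simp only [hc]; split_ifs <;> omega
  have castinj : ∀ a b : ℕ, a < 3 * k → b < 3 * k →
      ((a : ZMod (3 * k)) = (b : ZMod (3 * k))) → a = b := by
    intro a b ha hb hab
    have := congrArg ZMod.val hab
    rwa [ZMod.val_cast_of_lt ha, ZMod.val_cast_of_lt hb] at this
  have hTeq : ∀ i : ZMod (3 * k), T i =
      (fun t : ℕ => s(i + (c t : ZMod (3 * k)), i + (t : ZMod (3 * k)))) ''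
        (Set.Icc 1 (3 * k - 1)) := by
    intro i
    rw [hT i]
    ext e
    simp only [Set.mem_union, Set.mem_setOf_eq, Set.mem_image, Set.mem_Icc]
    constructor
    · rintro ((⟨t, ht1, ht2, rfl⟩ | ⟨t, ht1, ht2, rfl⟩) | ⟨t, ht1, ht2, rfl⟩)
      · refine ⟨t, ⟨ht1, by omega⟩, ?_⟩
        have h0 : c t = 0 := by simp only [hc]; rw [if_pos ht2]
        rw [h0]; norm_num
      · refine ⟨k + t, ⟨by omega, by omega⟩, ?_⟩
        have h0 : c (k + t) = k := by
          simp only [hc]; rw [if_neg (by omega), if_pos (by omega)]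
        rw [h0]; push_cast; rw [add_assoc]
      · refine ⟨2 * k + t, ⟨by omega, by omega⟩, ?_⟩
        have h0 : c (2 * k + t) = 2 * k := by
          simp only [hc]; rw [if_neg (by omega), if_neg (by omega)]
        rw [h0]; push_cast; rw [add_assoc]
    · rintro ⟨t, ⟨ht1, ht2⟩, rfl⟩
      by_cases h1 : t ≤ k
      · left; left
        refine ⟨t, ht1, h1, ?_⟩
        have h0 : c t = 0 := by simp only [hc]; rw [if_pos h1]
        rw [h0]; norm_num
      · by_cases h2 : t ≤ 2 * k
        · left; right
          refine ⟨t - k, by omega, by omega, ?_⟩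
          have h0 : c t = k := by simp only [hc]; rw [if_neg h1, if_pos h2]
          rw [h0]
          have hsub : ((t - k : ℕ) : ZMod (3 * k)) = (t : ZMod (3 * k)) - (k : ZMod (3 * k)) := by
            push_cast [Nat.cast_sub (by omega : k ≤ t)]; ring
          rw [hsub]; congr 1; ring_nf
        · right
          refine ⟨t - 2 * k, by omega, by omega, ?_⟩
          have h0 : c t = 2 * k := by simp only [hc]; rw [if_neg h1, if_neg h2]
          rw [h0]
          have hsub : ((t - 2 * k : ℕ) : ZMod (3 * k)) =
              (t : ZMod (3 * k)) - ((2 * k : ℕ) : ZMod (3 * k)) := by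
            push_cast [Nat.cast_sub (by omega : 2 * k ≤ t)]; ring
          rw [hsub]; congr 1; ring_nf
  have hinj : ∀ i : ZMod (3 * k), Set.InjOn
      (fun t : ℕ => s(i + (c t : ZMod (3 * k)), i + (t : ZMod (3 * k))))
      (Set.Icc 1 (3 * k - 1)) := by
    intro i a ha b hb hab
    simp only [Set.mem_Icc] at ha hb
    simp only [Sym2.eq_iff] at hab
    rcases hab with ⟨h1, h2⟩ | ⟨h1, h2⟩
    · exact castinj a b (by omega) (by omega) (add_left_cancel h2)
    · have e1 : c a = b := castinj _ _ (by have := hcle a; omega) (by omega) (add_left_cancel h1)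
      have e2 : a = c b := castinj _ _ (by omega) (by have := hcle b; omega) (add_left_cancel h2)
      have := hclt a ha.1; have := hclt b hb.1; omega
  have hncard : ∀ i : ZMod (3 * k), (T i).ncard = 3 * k - 1 := by
    intro i
    rw [hTeq i, Set.ncard_image_of_injOn (hinj i), ← Finset.coe_Icc,
      Set.ncard_coe_finset, Nat.card_Icc]
    omega
  have hadjmem : ∀ (i : ZMod (3 * k)) (t : ℕ), 1 ≤ t → t ≤ 3 * k - 1 →
      (SimpleGraph.fromEdgeSet (T i)).Adj (i + (c t : ZMod (3 * k))) (i + (t : ZMod (3 * k))) := by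
    intro i t h1 h2
    rw [SimpleGraph.fromEdgeSet_adj]
    refine ⟨by rw [hTeq i]; exact ⟨t, Set.mem_Icc.mpr ⟨h1, h2⟩, rfl⟩, ?_⟩
    intro h
    have hct := castinj _ _ (by have := hcle t; omega) (by omega) (add_left_cancel h)
    have := hclt t h1; omega
  have hreach : ∀ (i : ZMod (3 * k)) (t : ℕ), t < 3 * k →
      (SimpleGraph.fromEdgeSet (T i)).Reachable i (i + (t : ZMod (3 * k))) := by
    intro i t
    induction t using Nat.strong_induction_on with
    | _ t ih =>
      intro ht
      rcases Nat.eq_zero_or_pos t with rfl | hpos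
      · simp only [Nat.cast_zero, add_zero]
        exact SimpleGraph.Reachable.refl i
      · exact (ih (c t) (hclt t hpos) (by have := hcle t; omega)).trans
          (hadjmem i t hpos (by omega)).reachable
  have hconn : ∀ i : ZMod (3 * k), (SimpleGraph.fromEdgeSet (T i)).Connected := by
    intro i
    rw [SimpleGraph.connected_iff]
    refine ⟨fun u v => ?_, ⟨i⟩⟩
    have hu : u = i + (((u - i).val : ℕ) : ZMod (3 * k)) := by
      rw [ZMod.natCast_val, ZMod.cast_id]; ring
    have hv : v = i + (((v - i).val : ℕ) : ZMod (3 * k)) := by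
      rw [ZMod.natCast_val, ZMod.cast_id]; ring
    have r1 := hreach i (u - i).val (ZMod.val_lt _)
    have r2 := hreach i (v - i).val (ZMod.val_lt _)
    rw [← hu] at r1
    rw [← hv] at r2
    exact r1.symm.trans r2
  have hacyc : ∀ i : ZMod (3 * k), (SimpleGraph.fromEdgeSet (T i)).IsAcyclic := by
    intro i
    apply acyclic_of_rank _ (fun v => i + ((c ((v - i).val) : ℕ) : ZMod (3 * k)))
      (fun v => (v - i).val)
    intro x y hxy
    rw [SimpleGraph.fromEdgeSet_adj, hTeq i] at hxy
    obtain ⟨⟨t, ht, heq⟩, hne⟩ := hxy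
    rw [Set.mem_Icc] at ht
    rw [Sym2.eq_iff] at heq
    have hvalct : ((i + ((c t : ℕ) : ZMod (3 * k))) - i).val = c t := by
      rw [add_sub_cancel_left, ZMod.val_cast_of_lt (by have := hcle t; omega)]
    have hvalt : ((i + ((t : ℕ) : ZMod (3 * k))) - i).val = t := by
      rw [add_sub_cancel_left, ZMod.val_cast_of_lt (by omega)]
    rcases heq with ⟨rfl, rfl⟩ | ⟨rfl, rfl⟩
    · right
      constructor
      · simp only [hvalt]
      · simp only [hvalct, hvalt]
        exact hclt t ht.1
    · left
      constructor
      · simp only [hvalt]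
      · simp only [hvalct, hvalt]
        exact hclt t ht.1
  have hdisj : ∀ i j : ℕ, i < k → j < k → i ≠ j →
      Disjoint (T ((i : ℕ) : ZMod (3 * k))) (T ((j : ℕ) : ZMod (3 * k))) := by
    intro i j hi hj hij
    rw [Set.disjoint_left]
    rintro e he1 he2
    rw [hTeq] at he1 he2
    obtain ⟨s, hs, rfl⟩ := he1
    obtain ⟨t, ht, heq⟩ := he2
    rw [Set.mem_Icc] at hs ht
    rw [Sym2.eq_iff] at heq
    rcases heq with ⟨h1, h2⟩ | ⟨h1, h2⟩
    · have h1' : ((j + c t : ℕ) : ZMod (3 * k)) = ((i + c s : ℕ) : ZMod (3 * k)) := by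
        push_cast; exact h1
      have := castinj _ _ (by have := hcle t; omega) (by have := hcle s; omega) h1'
      have hcs := hcval s; have hct := hcval t
      omega
    · have hsum : (((s - c s) + (t - c t) : ℕ) : ZMod (3 * k)) = 0 := by
        push_cast [Nat.cast_sub (le_of_lt (hclt s hs.1)), Nat.cast_sub (le_of_lt (hclt t ht.1))]
        linear_combination h2 - h1
      rw [ZMod.natCast_eq_zero_iff] at hsum
      have hgs := hcgap s hs.2
      have hgt := hcgap t ht.2
      have hps := hclt s hs.1
      have := Nat.le_of_dvd (by omega) hsum
      omega
  exact ⟨hdisj, fun i hi => ⟨hncard _, hconn _, hacyc _⟩⟩
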